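/- Let X satisfy E e^{α|X|} ≤ 2 (α > 0) and let K(z) = log E e^{zX} be its log-Laplace transform, analytic in |z| ≤ α/2. Then for every integer k ≥ 1 and all complex z with |z| ≤ α/4, one has |K^{(k)}(z)| ≤ 3 k! (4/α)^k. -/

import Mathlib

open MeasureTheory ProbabilityTheory

lemma cauchy_bound' {f : ℂ → ℂ} {c : ℂ} {r C : ℝ} (hr : 0 < r)
    (hd : DifferentiableOn ℂ f (Metric.closedBall c r))
    (hC : ∀ w ∈ Metric.closedBall c r, ‖f w‖ ≤ C) (k : ℕ) :
    ‖iteratedDeriv k f c‖ ≤ C * k.factorial / r ^ k := by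
  have hC0 : 0 ≤ C := le_trans (norm_nonneg _) (hC c (Metric.mem_closedBall_self hr.le))
  set R : NNReal := ⟨r, hr.le⟩ with hR
  have hdc : DiffContOnCl ℂ f (Metric.ball c r) := by
    apply DifferentiableOn.diffContOnCl
    rwa [closure_ball c hr.ne']
  have hp : HasFPowerSeriesOnBall f (cauchyPowerSeries f c R) c R :=
    hdc.hasFPowerSeriesOnBall (by exact_mod_cast hr)
  set p := cauchyPowerSeries f c (R : ℝ) with hpdef
  have key : (k.factorial : ℂ) • (p k fun _ => (1:ℂ)) = iteratedFDeriv ℂ k f c fun _ => 1 := by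
    rw [Nat.cast_smul_eq_nsmul]
    exact hp.factorial_smul 1 k
  have h1 : ‖iteratedDeriv k f c‖ = k.factorial * ‖p k fun _ => (1:ℂ)‖ := by
    rw [iteratedDeriv_eq_iteratedFDeriv, ← key, norm_smul]
    simp
  have h2 : ‖p k fun _ => (1:ℂ)‖ ≤ ‖p k‖ := by
    have := (p k).le_opNorm fun _ => (1:ℂ)
    simpa using this
  have h3 : ‖p k‖ ≤ ((2 * Real.pi)⁻¹ * ∫ θ : ℝ in (0)..2 * Real.pi,
      ‖f (circleMap c r θ)‖) * |r|⁻¹ ^ k :=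
    norm_cauchyPowerSeries_le f c r k
  have hcont : Continuous fun θ : ℝ => ‖f (circleMap c r θ)‖ := by
    apply Continuous.norm
    apply continuousOn_univ.mp
    apply hd.continuousOn.comp (continuous_circleMap c r).continuousOn
    intro θ _
    have h := circleMap_mem_sphere' c r θ
    rw [abs_of_pos hr] at h
    exact Metric.sphere_subset_closedBall h
  have h4 : (∫ θ : ℝ in (0)..2 * Real.pi, ‖f (circleMap c r θ)‖) ≤ 2 * Real.pi * C := by
    have : (∫ θ : ℝ in (0)..2 * Real.pi, ‖f (circleMap c r θ)‖) ≤
        ∫ _θ : ℝ in (0)..2 * Real.pi, C := by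
      apply intervalIntegral.integral_mono_on Real.two_pi_pos.le (hcont.intervalIntegrable _ _)
        intervalIntegrable_const
      intro θ _
      apply hC
      have h := circleMap_mem_sphere' c r θ
      rw [abs_of_pos hr] at h
      exact Metric.sphere_subset_closedBall h
    simpa using this.trans (by simp [mul_comm])
  calc ‖iteratedDeriv k f c‖ = k.factorial * ‖p k fun _ => (1:ℂ)‖ := h1
    _ ≤ k.factorial * (((2 * Real.pi)⁻¹ * ∫ θ : ℝ in (0)..2 * Real.pi,
        ‖f (circleMap c r θ)‖) * |r|⁻¹ ^ k) := by
        gcongr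
        exact h2.trans h3
    _ ≤ k.factorial * (((2 * Real.pi)⁻¹ * (2 * Real.pi * C)) * |r|⁻¹ ^ k) := by
        gcongr
    _ = C * k.factorial / r ^ k := by
        rw [abs_of_pos hr]
        field_simp
        ring_nf
        rw [mul_assoc, ← mul_pow, mul_inv_cancel₀ hr.ne', one_pow, mul_one]

lemma my_norm_exp_sub_one_le (w : ℂ) : ‖Complex.exp w - 1‖ ≤ ‖w‖ * Real.exp ‖w‖ := by
  have key : ∀ t ∈ Set.Icc (0:ℝ) 1, HasDerivWithinAt (fun t : ℝ => Complex.exp ((t:ℂ) * w))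
      (w * Complex.exp ((t:ℂ) * w)) (Set.Icc 0 1) t := by
    intro t _
    have h1 : HasDerivAt (fun z : ℂ => Complex.exp (z * w)) (Complex.exp ((t:ℂ)*w) * w) (t:ℂ) := by
      simpa [Function.comp_def] using (Complex.hasDerivAt_exp ((t:ℂ)*w)).comp (t:ℂ) ((hasDerivAt_id ((t:ℂ))).mul_const w)
    have h2 := h1.comp_ofReal
    simpa [mul_comm] using h2.hasDerivWithinAt
  have bound : ∀ t ∈ Set.Icc (0:ℝ) 1, ‖w * Complex.exp ((t:ℂ) * w)‖ ≤ ‖w‖ * Real.exp ‖w‖ := by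
    intro t ht
    rw [norm_mul, Complex.norm_exp]
    have hre : ((t:ℂ) * w).re = t * w.re := by simp
    rw [hre]
    gcongr
    calc t * w.re ≤ |t * w.re| := le_abs_self _
      _ = |t| * |w.re| := abs_mul _ _
      _ ≤ 1 * ‖w‖ := by
          apply mul_le_mul
          · rw [abs_of_nonneg ht.1]; exact ht.2
          · exact (Complex.abs_re_le_norm w)
          · positivity
          · norm_num
      _ = ‖w‖ := one_mul _
  have := (convex_Icc (0:ℝ) 1).norm_image_sub_le_of_norm_hasDerivWithin_le key bound
    (Set.left_mem_Icc.2 zero_le_one) (Set.right_mem_Icc.2 zero_le_one)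
  simpa using this

lemma my_mul_exp_neg_le (s : ℝ) : s * Real.exp (-s) ≤ (Real.exp 1)⁻¹ := by
  have h : s - 1 + 1 ≤ Real.exp (s - 1) := Real.add_one_le_exp (s - 1)
  rw [Real.exp_sub, sub_add_cancel, div_eq_mul_inv] at h
  rw [Real.exp_neg]
  have h1 := Real.exp_pos s
  have h2 := Real.exp_pos 1
  calc s * (Real.exp s)⁻¹ ≤ (Real.exp s * (Real.exp 1)⁻¹) * (Real.exp s)⁻¹ := by
        apply mul_le_mul_of_nonneg_right h (by positivity)
    _ = (Real.exp 1)⁻¹ := by field_simp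

/-- If `E e^{α|X|} ≤ 2` (`α > 0`) and `K(z) = log E e^{zX}` is the log-Laplace transform of
`X`, then for every integer `k ≥ 1` and all `|z| ≤ α/4` one has `|K⁽ᵏ⁾(z)| ≤ 3 k! (4/α)^k`. -/
theorem stmt_6 {Ω : Type*} [MeasurableSpace Ω] {P : Measure Ω} [IsProbabilityMeasure P]
    (X : Ω → ℝ) (hmeas : Measurable X) (α : ℝ) (hα : 0 < α)
    (hexp : ∫⁻ ω, ENNReal.ofReal (Real.exp (α * |X ω|)) ∂P ≤ 2)
    (K : ℂ → ℂ)
    (hK : ∀ z : ℂ, K z = Complex.log (∫ ω, Complex.exp (z * X ω) ∂P)) :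
    ∀ k : ℕ, 1 ≤ k → ∀ z : ℂ, ‖z‖ ≤ α / 4 →
      ‖iteratedDeriv k K z‖ ≤ 3 * (Nat.factorial k) * (4 / α) ^ k := by
  intro k _hk z hz
  set F : ℂ → ℂ := fun w => ∫ ω, Complex.exp (w * X ω) ∂P with hF
  have hKfun : K = fun w => Complex.log (F w) := funext hK
  -- integrability of the dominating function
  have hmeasE : Measurable fun ω => Real.exp (α * |X ω|) := (hmeas.abs.const_mul α).exp
  have hInt : Integrable (fun ω => Real.exp (α * |X ω|)) P := by
    refine ⟨hmeasE.aestronglyMeasurable, ?_⟩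
    rw [HasFiniteIntegral]
    have heq : (∫⁻ ω, ‖Real.exp (α * |X ω|)‖ₑ ∂P) =
        ∫⁻ ω, ENNReal.ofReal (Real.exp (α * |X ω|)) ∂P := by
      apply lintegral_congr
      intro ω
      rw [← ofReal_norm, Real.norm_eq_abs,
        abs_of_pos (Real.exp_pos _)]
    rw [heq]
    exact lt_of_le_of_lt hexp (by norm_num)
  have hIntle : ∫ ω, Real.exp (α * |X ω|) ∂P ≤ 2 := by
    rw [integral_eq_lintegral_of_nonneg_ae (ae_of_all _ fun ω => (Real.exp_pos _).le)
      hmeasE.aestronglyMeasurable]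
    refine ENNReal.toReal_le_of_le_ofReal (by norm_num) ?_
    refine hexp.trans (le_of_eq ?_)
    norm_num
  -- measurability of the integrand
  have hmc : ∀ w : ℂ, AEStronglyMeasurable (fun ω => Complex.exp (w * X ω)) P :=
    fun w => (((Complex.measurable_ofReal.comp hmeas).const_mul w).cexp).aestronglyMeasurable
  -- integrability of the integrand for ‖w‖ ≤ α
  have hIexp : ∀ w : ℂ, ‖w‖ ≤ α → Integrable (fun ω => Complex.exp (w * X ω)) P := by
    intro w hw
    refine hInt.mono (hmc w) (ae_of_all _ fun ω => ?_)
    rw [Complex.norm_exp, Real.norm_eq_abs, abs_of_pos (Real.exp_pos _)]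
    apply Real.exp_le_exp.2
    have hre : (w * (X ω : ℂ)).re = w.re * X ω := by simp
    rw [hre]
    calc w.re * X ω ≤ |w.re * X ω| := le_abs_self _
      _ = |w.re| * |X ω| := abs_mul _ _
      _ ≤ α * |X ω| := by
          gcongr
          exact (Complex.abs_re_le_norm w).trans hw
  -- differentiability of F on the closed ball of radius α/2
  have hFd : ∀ w ∈ Metric.closedBall (0:ℂ) (α/2), DifferentiableAt ℂ F w := by
    intro w hw
    rw [Metric.mem_closedBall, dist_zero_right] at hw
    have hbound : ∀ᵐ ω ∂P, ∀ x ∈ Metric.ball w (α/4),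
        ‖(X ω : ℂ) * Complex.exp (x * X ω)‖ ≤ 4/α * Real.exp (α * |X ω|) := by
      refine ae_of_all _ fun ω x hx => ?_
      rw [Metric.mem_ball, dist_eq_norm] at hx
      have hxn : ‖x‖ ≤ 3*α/4 := by
        have h1 := norm_sub_norm_le x w
        linarith
      rw [norm_mul, Complex.norm_exp,
        Complex.norm_real, Real.norm_eq_abs]
      have hre : (x * (X ω : ℂ)).re = x.re * X ω := by simp
      rw [hre]
      have h1 : x.re * X ω ≤ 3*α/4 * |X ω| := by
        calc x.re * X ω ≤ |x.re * X ω| := le_abs_self _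
          _ = |x.re| * |X ω| := abs_mul _ _
          _ ≤ 3*α/4 * |X ω| := by
              gcongr
              exact (Complex.abs_re_le_norm x).trans hxn
      have h2 : |X ω| ≤ 4/α * Real.exp (α/4 * |X ω|) := by
        have h3 : α/4 * |X ω| + 1 ≤ Real.exp (α/4 * |X ω|) := Real.add_one_le_exp _
        have h4 : (0:ℝ) < 4/α := by positivity
        have h5 := mul_le_mul_of_nonneg_left h3 h4.le
        rw [mul_add, mul_one] at h5
        have h6 : 4/α * (α/4 * |X ω|) = |X ω| := by
          field_simp
        linarith
      calc |X ω| * Real.exp (x.re * X ω)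
          ≤ (4/α * Real.exp (α/4 * |X ω|)) * Real.exp (3*α/4 * |X ω|) := by
            apply mul_le_mul h2 (Real.exp_le_exp.2 h1) (Real.exp_pos _).le (by positivity)
        _ = 4/α * Real.exp (α * |X ω|) := by
            rw [mul_assoc, ← Real.exp_add]
            ring_nf
    have hdiff : ∀ᵐ ω ∂P, ∀ x ∈ Metric.ball w (α/4),
        HasDerivAt (fun y => Complex.exp (y * X ω)) ((X ω : ℂ) * Complex.exp (x * X ω)) x := by
      refine ae_of_all _ fun ω x _ => ?_
      simpa [mul_comm, Function.comp_def] using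
        (Complex.hasDerivAt_exp (x * X ω)).comp x ((hasDerivAt_id x).mul_const ((X ω : ℂ)))
    have hder := hasDerivAt_integral_of_dominated_loc_of_deriv_le (μ := P)
      (F := fun x ω => Complex.exp (x * X ω)) (F' := fun x ω => (X ω : ℂ) * Complex.exp (x * X ω))
      (x₀ := w) (bound := fun ω => 4/α * Real.exp (α * |X ω|)) (s := Metric.ball w (α/4))
      (Metric.ball_mem_nhds w (by positivity))
      (Filter.Eventually.of_forall fun x => hmc x)
      (hIexp w (hw.trans (by linarith)))
      (((Complex.measurable_ofReal.comp hmeas).mul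
        (((Complex.measurable_ofReal.comp hmeas).const_mul w).cexp)).aestronglyMeasurable)
      hbound
      (hInt.const_mul _)
      hdiff
    exact hder.2.differentiableAt
  -- bound ‖F w - 1‖ ≤ 3/4 on the closed ball of radius α/2
  have hF1 : ∀ w ∈ Metric.closedBall (0:ℂ) (α/2), ‖F w - 1‖ ≤ 3/4 := by
    intro w hw
    rw [Metric.mem_closedBall, dist_zero_right] at hw
    have hIw : Integrable (fun ω => Complex.exp (w * X ω)) P := hIexp w (by linarith)
    have heq : F w - 1 = ∫ ω, (Complex.exp (w * X ω) - 1) ∂P := by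
      rw [integral_sub hIw (integrable_const 1), integral_const]
      simp [hF]
    rw [heq]
    have hbd : ∀ ω, ‖Complex.exp (w * X ω) - 1‖ ≤ (Real.exp 1)⁻¹ * Real.exp (α * |X ω|) := by
      intro ω
      refine (my_norm_exp_sub_one_le _).trans ?_
      have hn : ‖w * (X ω : ℂ)‖ ≤ α/2 * |X ω| := by
        rw [norm_mul, Complex.norm_real, Real.norm_eq_abs]
        gcongr
      calc ‖w * (X ω : ℂ)‖ * Real.exp ‖w * (X ω : ℂ)‖
          ≤ (α/2 * |X ω|) * Real.exp (α/2 * |X ω|) := by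
            apply mul_le_mul hn (Real.exp_le_exp.2 hn) (Real.exp_pos _).le (by positivity)
        _ = (α/2 * |X ω|) * Real.exp (-(α/2 * |X ω|)) * Real.exp (α * |X ω|) := by
            rw [mul_assoc, mul_assoc, ← Real.exp_add]
            ring_nf
        _ ≤ (Real.exp 1)⁻¹ * Real.exp (α * |X ω|) := by
            apply mul_le_mul_of_nonneg_right (my_mul_exp_neg_le _) (Real.exp_pos _).le
    calc ‖∫ ω, (Complex.exp (w * X ω) - 1) ∂P‖
        ≤ ∫ ω, (Real.exp 1)⁻¹ * Real.exp (α * |X ω|) ∂P :=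
          norm_integral_le_of_norm_le (hInt.const_mul _) (ae_of_all _ hbd)
      _ = (Real.exp 1)⁻¹ * ∫ ω, Real.exp (α * |X ω|) ∂P := integral_const_mul _ _
      _ ≤ (Real.exp 1)⁻¹ * 2 := by
          gcongr
      _ ≤ 3/4 := by
          have he : (8:ℝ)/3 ≤ Real.exp 1 := by
            have := Real.exp_one_gt_d9
            linarith
          have h0 := Real.exp_pos 1
          rw [inv_mul_le_iff₀ h0] -- (exp 1)⁻¹ * 2 ≤ 3/4 ↔ 2 ≤ exp 1 * (3/4)? check direction
          nlinarith
  -- F w lies in the slit plane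
  have hslit : ∀ w ∈ Metric.closedBall (0:ℂ) (α/2), F w ∈ Complex.slitPlane := by
    intro w hw
    have h := hF1 w hw
    have h1 : |(F w - 1).re| ≤ 3/4 := (Complex.abs_re_le_norm _).trans h
    have h2 : (F w - 1).re = (F w).re - 1 := by simp
    rw [h2] at h1
    rw [Complex.mem_slitPlane_iff]
    left
    have := (abs_le.mp h1).1
    linarith
  -- K is differentiable on the closed ball of radius α/2
  have hKd : DifferentiableOn ℂ K (Metric.closedBall (0:ℂ) (α/2)) := by
    intro w hw
    rw [hKfun]
    exact ((hFd w hw).clog (hslit w hw)).differentiableWithinAt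
  -- bound ‖K w‖ ≤ 3
  have hKb : ∀ w ∈ Metric.closedBall (0:ℂ) (α/2), ‖K w‖ ≤ 3 := by
    intro w hw
    have h := hF1 w hw
    have hlt : ‖F w - 1‖ < 1 := lt_of_le_of_lt h (by norm_num)
    have h1 : K w = Complex.log (1 + (F w - 1)) := by
      rw [hK w, add_sub_cancel]
    rw [h1]
    refine (Complex.norm_log_one_add_le hlt).trans ?_
    have h2 : (1 - ‖F w - 1‖)⁻¹ ≤ 4 := by
      rw [inv_le_comm₀ (by linarith) (by norm_num)]
      linarith
    nlinarith [norm_nonneg (F w - 1), sq_nonneg (‖F w - 1‖)]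
  -- Cauchy estimates
  have hsub : Metric.closedBall z (α/4) ⊆ Metric.closedBall (0:ℂ) (α/2) := by
    apply Metric.closedBall_subset_closedBall'
    rw [dist_zero_right] at *
    linarith
  have hmain := cauchy_bound' (by positivity : (0:ℝ) < α/4) (hKd.mono hsub)
    (fun w hw => hKb w (hsub hw)) k
  calc ‖iteratedDeriv k K z‖ ≤ 3 * k.factorial / (α/4) ^ k := hmain
    _ = 3 * (Nat.factorial k) * (4/α) ^ k := by
        rw [div_eq_mul_inv, ← inv_pow, inv_div]
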